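/- arXiv:2507.20458 — 2 statements merged into one kernel-verified Lean document; each statement's English description precedes it below -/
import Mathlib

section
/- Let C be a self-orthogonal right R-module and n ≥ 0. If N is a right R-module with Ext^i_R(C, N) = 0 for all i ≥ 1, and there exists an exact sequence 0 → N → C⁰ → C¹ → ··· → Cⁿ → 0 with each C^i ∈ add(C), then N ∈ add(C). That is, the intersection of the category of modules admitting a length-n add(C)-coresolution with C^⊥ equals add(C). -/
/-!
STATEMENT 3: Let C be a self-orthogonal right R-module (right R-modules are modeled
as `Rᵐᵒᵖ`-modules) and n ≥ 0.  If N satisfies Ext^i_R(C, N) = 0 for all i ≥ 1 and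
admits an exact sequence 0 → N → C⁰ → ⋯ → Cⁿ → 0 with each Cⁱ ∈ add(C), then
N ∈ add(C).
Encoding: `D 0 = N`, `D 1, …, D (n+1)` are `C⁰, …, Cⁿ`; the maps are
`d i : D i ⟶ D (i+1)`; values of `D`, `d` at indices `> n+1` are irrelevant.
-/

open CategoryTheory Opposite

/-- `extM A i X Y` is the Ext group `Ext^i_A(X, Y)` in the category of `A`-modules. -/
noncomputable def extM (A : Type) [Ring A] (i : ℕ) (X Y : ModuleCat.{0} A) : ModuleCat.{0} ℤ :=
  ((Ext ℤ (ModuleCat.{0} A) i).obj (op X)).obj Y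

/-- `N ∈ add(C)`: `N` is a direct summand of a finite direct sum of copies of `C`. -/
def memAdd (A : Type) [Ring A] (C : Type) [AddCommGroup C] [Module A C]
    (N : ModuleCat.{0} A) : Prop :=
  ∃ (k : ℕ) (s : N →ₗ[A] (Fin k → C)) (r : (Fin k → C) →ₗ[A] N),
    r ∘ₗ s = LinearMap.id

section Helpers

variable {A : Type} [Ring A]

lemma subsingleton_of_iso {X Z : ModuleCat.{0} ℤ} (e : X ≅ Z) (h : Subsingleton Z) :
    Subsingleton X := by
  refine ⟨fun a b => ?_⟩
  have h2 : e.inv (e.hom a) = e.inv (e.hom b) := congrArg e.inv (h.elim _ _)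
  have h3 : ∀ x : X, e.inv (e.hom x) = x := fun x => by
    calc e.inv (e.hom x) = (e.hom ≫ e.inv) x := rfl
      _ = x := by rw [e.hom_inv_id]; rfl
  rwa [h3, h3] at h2

/-- vanishing condition: every `(i+1)`-cocycle of `Hom(P, Y)` is a coboundary;
equivalent to `Subsingleton (Ext^(i+1)(C, Y))`. -/
def Van {Cob : ModuleCat.{0} A} (P : ProjectiveResolution Cob) (Y : ModuleCat.{0} A)
    (i : ℕ) : Prop :=
  ∀ α : P.complex.X (i + 1) ⟶ Y, P.complex.d (i + 2) (i + 1) ≫ α = 0 →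
    ∃ σ : P.complex.X i ⟶ Y, P.complex.d (i + 1) i ≫ σ = α

lemma van_iff {Cob : ModuleCat.{0} A} (P : ProjectiveResolution Cob) (Y : ModuleCat.{0} A)
    (i : ℕ) : Subsingleton (extM A (i + 1) Cob Y) ↔ Van P Y i := by
  have e := P.isoExt (R := ℤ) (i + 1) Y
  set K := P.complex.linearYonedaObj ℤ Y with hK
  have h1 : Subsingleton (extM A (i + 1) Cob Y) ↔ Subsingleton (K.homology (i + 1)) :=
    ⟨fun h => subsingleton_of_iso e.symm h, fun h => subsingleton_of_iso e h⟩
  have h2 : Subsingleton (K.homology (i + 1)) ↔ K.ExactAt (i + 1) := by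
    rw [HomologicalComplex.exactAt_iff_isZero_homology]
    constructor
    · intro h; exact ModuleCat.isZero_of_subsingleton _
    · intro h
      have hid : 𝟙 (K.homology (i + 1)) = 0 := h.eq_of_src _ _
      refine ⟨fun a b => ?_⟩
      have hz : ∀ x : K.homology (i + 1), x = 0 := fun x => by
        calc x = (𝟙 (K.homology (i + 1))) x := rfl
          _ = (0 : K.homology (i+1) ⟶ K.homology (i+1)) x := by rw [hid]
          _ = 0 := rfl
      rw [hz a, hz b]
  have h3 : K.ExactAt (i + 1) ↔ (K.sc' i (i + 1) (i + 2)).Exact :=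
    K.exactAt_iff' i (i + 1) (i + 2)
      ((ComplexShape.up ℕ).prev_eq' (by simp)) ((ComplexShape.up ℕ).next_eq' (by simp))
  rw [h1, h2, h3, ShortComplex.moduleCat_exact_iff]
  exact Iff.rfl

variable {Cob : ModuleCat.{0} A} (P : ProjectiveResolution Cob)

/-- `Van` passes to retracts. -/
lemma van_retract {Y Z : ModuleCat.{0} A} (s : Y ⟶ Z) (r : Z ⟶ Y) (hrs : s ≫ r = 𝟙 Y)
    (h : ∀ i, Van P Z i) : ∀ i, Van P Y i := by
  intro i α hα
  obtain ⟨σ, hσ⟩ := h i (α ≫ s) (by rw [← Category.assoc, hα, Limits.zero_comp])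
  refine ⟨σ ≫ r, ?_⟩
  rw [← Category.assoc, hσ, Category.assoc, hrs, Category.comp_id]

end Helpers

section Helpers2

variable {A : Type} [Ring A] {Cob : ModuleCat.{0} A} (P : ProjectiveResolution Cob)

lemma van_pi {C : Type} [AddCommGroup C] [Module A C]
    (hC : ∀ i, Van P (ModuleCat.of A C) i) (k : ℕ) :
    ∀ i, Van P (ModuleCat.of A (Fin k → C)) i := by
  intro i α hα
  choose σ hσ using fun j : Fin k =>
    hC i (α ≫ ModuleCat.ofHom (LinearMap.proj j))
      (by rw [← Category.assoc, hα, Limits.zero_comp])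
  refine ⟨ModuleCat.ofHom (LinearMap.pi fun j => (σ j).hom), ?_⟩
  apply ModuleCat.hom_ext; apply LinearMap.ext; intro x; funext j
  exact ConcreteCategory.congr_hom (hσ j) x

lemma van_of_memAdd {C : Type} [AddCommGroup C] [Module A C] {Y : ModuleCat.{0} A}
    (hY : memAdd A C Y) (hC : ∀ i, Van P (ModuleCat.of A C) i) :
    ∀ i, Van P Y i := by
  obtain ⟨k, s, r, hrs⟩ := hY
  refine van_retract P (ModuleCat.ofHom s) (Y := Y) (Z := ModuleCat.of A (Fin k → C))
    (ModuleCat.ofHom r) ?_ (van_pi P hC k)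
  exact ModuleCat.hom_ext hrs

lemma exists_factor {M0 M1 M2 W : ModuleCat.{0} A} (f : M0 ⟶ M1) (g : M1 ⟶ M2)
    (hf : Function.Injective f) (hfg : Function.Exact f g) (u : W ⟶ M1)
    (hu : u ≫ g = 0) : ∃ γ : W ⟶ M0, γ ≫ f = u := by
  have hmem : ∀ x : W, u x ∈ LinearMap.range f.hom := by
    intro x
    have h0 : g (u x) = 0 := ConcreteCategory.congr_hom hu x
    obtain ⟨y, hy⟩ := (hfg (u x)).mp h0
    exact ⟨y, hy⟩
  set e := LinearEquiv.ofInjective f.hom hf with he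
  refine ⟨ModuleCat.ofHom (e.symm.toLinearMap ∘ₗ
    LinearMap.codRestrict (LinearMap.range f.hom) u.hom hmem), ?_⟩
  apply ModuleCat.hom_ext; apply LinearMap.ext; intro x
  have h1 := e.apply_symm_apply ⟨u x, hmem x⟩
  have h2 := congrArg Subtype.val h1
  have h3 : (↑(e (e.symm ⟨u x, hmem x⟩)) : M1) = f (e.symm ⟨u x, hmem x⟩) :=
    LinearEquiv.ofInjective_apply _ _
  show f (e.symm ⟨u x, hmem x⟩) = u x
  rw [← h3, h2]

lemma van_propagate {M0 M1 M2 : ModuleCat.{0} A} (f : M0 ⟶ M1) (g : M1 ⟶ M2)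
    (hf : Function.Injective f) (hg : Function.Surjective g)
    (hfg : Function.Exact f g) (h0 : ∀ i, Van P M0 i) (h1 : ∀ i, Van P M1 i) :
    ∀ i, Van P M2 i := by
  intro i α hα
  haveI : Epi g := (ModuleCat.epi_iff_surjective g).mpr hg
  set β := Projective.factorThru α g with hβdef
  have hβ : β ≫ g = α := Projective.factorThru_comp α g
  have hdβg : (P.complex.d (i + 2) (i + 1) ≫ β) ≫ g = 0 := by
    rw [Category.assoc, hβ, hα]
  obtain ⟨γ, hγ⟩ := exists_factor f g hf hfg _ hdβg
  have hdγ : P.complex.d (i + 3) (i + 2) ≫ γ = 0 := by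
    apply ModuleCat.hom_ext; apply LinearMap.ext; intro x
    apply hf
    have h2 : (P.complex.d (i + 3) (i + 2) ≫ γ ≫ f) x = 0 := by
      rw [hγ, ← Category.assoc, HomologicalComplex.d_comp_d, Limits.zero_comp]
      rfl
    simpa using h2
  obtain ⟨σ, hσ⟩ := h0 (i + 1) γ hdγ
  have hβ' : P.complex.d (i + 2) (i + 1) ≫ (β - σ ≫ f) = 0 := by
    rw [Preadditive.comp_sub, ← Category.assoc, hσ, hγ, sub_self]
  obtain ⟨τ, hτ⟩ := h1 i (β - σ ≫ f) hβ'
  refine ⟨τ ≫ g, ?_⟩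
  rw [← Category.assoc, hτ, Preadditive.sub_comp, hβ, Category.assoc]
  have hfg0 : f ≫ g = 0 := by
    apply ModuleCat.hom_ext; apply LinearMap.ext; intro x
    exact hfg.apply_apply_eq_zero x
  rw [hfg0, Limits.comp_zero, sub_zero]

end Helpers2

section Lift

variable {A : Type} [Ring A] {Cob : ModuleCat.{0} A} (P : ProjectiveResolution Cob)

noncomputable def pzero : P.complex.X 0 ⟶ Cob :=
  P.π.f 0 ≫ (HomologicalComplex.singleObjXSelf (ComplexShape.down ℕ) 0 Cob).hom

lemma pzero_d : P.complex.d 1 0 ≫ pzero P = 0 := by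
  rw [pzero, ← Category.assoc, P.complex_d_comp_π_f_zero, Limits.zero_comp]

lemma pzero_epi : Epi (pzero P) := epi_comp _ _

lemma pzero_exact : ∀ y : P.complex.X 0, pzero P y = 0 → ∃ x, P.complex.d 1 0 x = y := by
  have hcolim : Limits.IsColimit (Limits.CokernelCofork.ofπ (pzero P) (pzero_d P)) := by
    refine Limits.IsColimit.ofIsoColimit P.isColimitCokernelCofork ?_
    exact Limits.Cofork.ext (HomologicalComplex.singleObjXSelf (ComplexShape.down ℕ) 0 Cob) rfl
  have hexact : (ShortComplex.mk (P.complex.d 1 0) (pzero P) (pzero_d P)).Exact :=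
    ShortComplex.exact_of_g_is_cokernel _ hcolim
  intro y hy
  obtain ⟨x, hx⟩ := (ShortComplex.moduleCat_exact_iff _).mp hexact y hy
  exact ⟨x, hx⟩

lemma lift_along {M0 M1 M2 : ModuleCat.{0} A} (f : M0 ⟶ M1) (g : M1 ⟶ M2)
    (hf : Function.Injective f) (hg : Function.Surjective g)
    (hfg : Function.Exact f g) (h0 : Van P M0 0) (φ : Cob ⟶ M2) :
    ∃ ψ : Cob ⟶ M1, ψ ≫ g = φ := by
  haveI : Epi g := (ModuleCat.epi_iff_surjective g).mpr hg
  set β := Projective.factorThru (pzero P ≫ φ) g with hβdef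
  have hβ : β ≫ g = pzero P ≫ φ := Projective.factorThru_comp _ g
  have hdβg : (P.complex.d 1 0 ≫ β) ≫ g = 0 := by
    rw [Category.assoc, hβ, ← Category.assoc, pzero_d, Limits.zero_comp]
  obtain ⟨γ, hγ⟩ := exists_factor f g hf hfg _ hdβg
  have hdγ : P.complex.d 2 1 ≫ γ = 0 := by
    apply ModuleCat.hom_ext; apply LinearMap.ext; intro x
    apply hf
    have h2 : (P.complex.d 2 1 ≫ γ ≫ f) x = 0 := by
      rw [hγ, ← Category.assoc, HomologicalComplex.d_comp_d, Limits.zero_comp]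
      rfl
    simpa using h2
  obtain ⟨σ, hσ⟩ := h0 γ hdγ
  set β' : P.complex.X 0 ⟶ M1 := β - σ ≫ f with hβ'def
  have hdβ' : ∀ x, x ∈ LinearMap.ker (pzero P).hom → β' x = 0 := by
    intro x hx
    obtain ⟨w, hw⟩ := pzero_exact P x hx
    have h3 : (P.complex.d 1 0 ≫ β') w = 0 := by
      rw [hβ'def, Preadditive.comp_sub, ← Category.assoc, hσ, hγ, sub_self]
      rfl
    rw [← hw]
    exact h3
  have hpsurj : Function.Surjective (pzero P) := (ModuleCat.epi_iff_surjective _).mp (pzero_epi P)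
  set e2 := LinearMap.quotKerEquivOfSurjective (pzero P).hom hpsurj with he2
  set ψ : Cob ⟶ M1 := ModuleCat.ofHom
    ((Submodule.liftQ _ β'.hom hdβ') ∘ₗ e2.symm.toLinearMap) with hψ
  have hψp : ∀ x : P.complex.X 0, ψ (pzero P x) = β' x := by
    intro x
    have h4 : e2 (Submodule.Quotient.mk x) = pzero P x := rfl
    have h5 : e2.symm (pzero P x) = Submodule.Quotient.mk x := by
      rw [← h4, e2.symm_apply_apply]
    show (Submodule.liftQ _ β'.hom hdβ') (e2.symm (pzero P x)) = β' x
    rw [h5]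
    rfl
  refine ⟨ψ, ?_⟩
  apply ModuleCat.hom_ext; apply LinearMap.ext; intro c
  obtain ⟨x, hx⟩ := hpsurj c
  have h6 : (ψ ≫ g) c = g (β' x) := by rw [← hx]; exact congrArg g (hψp x)
  rw [h6, ← hx]
  have h7 : g (β' x) = (β' ≫ g) x := rfl
  rw [h7, hβ'def, Preadditive.sub_comp, Category.assoc]
  have hfg0 : f ≫ g = 0 := by
    apply ModuleCat.hom_ext; apply LinearMap.ext; intro y
    exact hfg.apply_apply_eq_zero y
  rw [hfg0, Limits.comp_zero, sub_zero, hβ]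
  rfl

end Lift

section Main

variable {A : Type} [Ring A]

lemma memAdd_retract {C : Type} [AddCommGroup C] [Module A C] {Y Z : ModuleCat.{0} A}
    (s : Y →ₗ[A] Z) (r : Z →ₗ[A] Y) (h : r ∘ₗ s = LinearMap.id)
    (hZ : memAdd A C Z) : memAdd A C Y := by
  obtain ⟨k, s1, r1, h1⟩ := hZ
  refine ⟨k, s1 ∘ₗ s, r ∘ₗ r1, ?_⟩
  apply LinearMap.ext; intro x
  have e1 : r1 (s1 (s x)) = s x := LinearMap.congr_fun h1 (s x)
  have e2 : r (s x) = x := LinearMap.congr_fun h x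
  show r (r1 (s1 (s x))) = x
  rw [e1, e2]

lemma main_induction (C : Type) [AddCommGroup C] [Module A C]
    (P : ProjectiveResolution (ModuleCat.of A C))
    (hsoV : ∀ i, Van P (ModuleCat.of A C) i) :
    ∀ (n : ℕ) (D : ℕ → ModuleCat.{0} A) (d : ∀ i, D i ⟶ D (i + 1)),
      Function.Injective (d 0) → Function.Surjective (d n) →
      (∀ i < n, Function.Exact (d i) (d (i + 1))) →
      (∀ i ≤ n, memAdd A C (D (i + 1))) →
      (∀ i, Van P (D 0) i) →
      memAdd A C (D 0) := by
  intro n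
  induction n with
  | zero =>
    intro D d hinj hsurj _ hCi _
    have e := LinearEquiv.ofBijective (d 0).hom ⟨hinj, hsurj⟩
    refine memAdd_retract e.toLinearMap e.symm.toLinearMap ?_ (hCi 0 le_rfl)
    apply LinearMap.ext; intro x
    exact e.symm_apply_apply x
  | succ n ih =>
    intro D d hinj hsurj hexact hCi hVD0
    -- the cokernel of d 0, realized as the range of d 1
    set N₁ : ModuleCat.{0} A := ModuleCat.of A (LinearMap.range (d 1).hom) with hN₁
    set g : D 1 ⟶ N₁ := ModuleCat.ofHom (LinearMap.rangeRestrict (d 1).hom) with hgdef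
    have hg : Function.Surjective g := LinearMap.surjective_rangeRestrict _
    have hfg : Function.Exact (d 0) g := by
      intro y
      have h1 : (g y = 0) ↔ ((d 1) y = 0) := by
        constructor
        · intro h; exact congrArg Subtype.val h
        · intro h; exact Subtype.ext h
      rw [h1]
      exact hexact 0 (Nat.succ_pos n) y
    have hVD1 : ∀ i, Van P (D 1) i := van_of_memAdd P (hCi 0 (Nat.zero_le _)) hsoV
    have hVN1 : ∀ i, Van P N₁ i := van_propagate P (d 0) g hinj hg hfg hVD0 hVD1
    -- the truncated coresolution of N₁
    have hmemN1 : memAdd A C N₁ := by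
      refine ih (fun i => match i with | 0 => N₁ | (j+1) => D (j + 2))
        (fun i => match i with
          | 0 => (ModuleCat.ofHom (Submodule.subtype _) : N₁ ⟶ D 2)
          | (j+1) => d (j + 2)) ?_ ?_ ?_ ?_ ?_
      · exact Submodule.injective_subtype _
      · cases n with
        | zero =>
          intro y
          obtain ⟨x, hx⟩ := hsurj y
          exact ⟨⟨y, ⟨x, hx⟩⟩, rfl⟩
        | succ m => exact hsurj
      · intro i hi
        match i with
        | 0 =>
          intro y
          have h2 := hexact 1 (by omega) y
          rw [h2]
          constructor
          · rintro ⟨x, hx⟩; exact ⟨⟨y, ⟨x, hx⟩⟩, rfl⟩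
          · rintro ⟨⟨y', ⟨x, hx⟩⟩, hy'⟩; exact ⟨x, by rw [hx]; exact hy'⟩
        | (j+1) => exact hexact (j + 2) (by omega)
      · intro i hi
        exact hCi (i + 1) (by omega)
      · exact hVN1
    -- lift the retraction r : C^k → N₁ through g, coordinatewise
    obtain ⟨k, s, r, hrs⟩ := hmemN1
    have hlift : ∀ j : Fin k, ∃ ψ : ModuleCat.of A C ⟶ D 1,
        ψ ≫ g = ModuleCat.ofHom (r ∘ₗ LinearMap.single A (fun _ : Fin k => C) j) :=
      fun j => lift_along P (d 0) g hinj hg hfg (hVD0 0) _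
    choose ψ hψ using hlift
    set hmap : (Fin k → C) →ₗ[A] D 1 :=
      ∑ j : Fin k, (ψ j).hom ∘ₗ LinearMap.proj j with hhm
    have hgh : ∀ x : Fin k → C, g (hmap x) = r x := by
      intro x
      have h3 : hmap x = ∑ j : Fin k, ψ j (x j) := by
        rw [hhm]
        simp only [LinearMap.sum_apply]
        exact Finset.sum_congr rfl (fun j _ => rfl)
      rw [h3, map_sum]
      have h4 : ∀ j : Fin k, g (ψ j (x j)) = r (Pi.single j (x j)) := by
        intro j
        have := ConcreteCategory.congr_hom (hψ j) (x j)
        simpa using this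
      rw [Finset.sum_congr rfl (fun j _ => h4 j), ← map_sum]
      congr 1
      exact Finset.univ_sum_single x
    set t : N₁ →ₗ[A] D 1 := hmap ∘ₗ s with ht
    have hgt : ∀ y : N₁, g (t y) = y := by
      intro y
      show g (hmap (s y)) = y
      rw [hgh (s y)]
      exact LinearMap.congr_fun hrs y
    -- construct the retraction D 1 → D 0
    set e0 := LinearEquiv.ofInjective (d 0).hom hinj with he0
    set pmap : D 1 →ₗ[A] D 1 := LinearMap.id - t ∘ₗ g.hom with hpm
    have hpmem : ∀ y : D 1, pmap y ∈ LinearMap.range (d 0).hom := by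
      intro y
      have h5 : g (pmap y) = 0 := by
        rw [hpm]
        simp only [LinearMap.sub_apply, LinearMap.id_apply, LinearMap.comp_apply, map_sub]
        rw [hgt]
        exact sub_self _
      obtain ⟨x, hx⟩ := (hfg (pmap y)).mp h5
      exact ⟨x, hx⟩
    set ρ : D 1 →ₗ[A] D 0 := e0.symm.toLinearMap ∘ₗ
      LinearMap.codRestrict (LinearMap.range (d 0).hom) pmap hpmem with hρ
    have hdρ : ∀ y : D 1, (d 0) (ρ y) = pmap y := by
      intro y
      have h6 : (↑(e0 (e0.symm ⟨pmap y, hpmem y⟩)) : D 1) = (d 0) (e0.symm ⟨pmap y, hpmem y⟩) :=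
        LinearEquiv.ofInjective_apply _ _
      show (d 0) (e0.symm ⟨pmap y, hpmem y⟩) = pmap y
      rw [← h6, e0.apply_symm_apply]
    have hρd : ∀ x : D 0, ρ ((d 0) x) = x := by
      intro x
      apply hinj
      rw [hdρ, hpm]
      simp only [LinearMap.sub_apply, LinearMap.id_apply, LinearMap.comp_apply]
      have h7 : g ((d 0) x) = 0 := hfg.apply_apply_eq_zero x
      rw [h7, map_zero, sub_zero]
    refine memAdd_retract (Z := D 1) (d 0).hom ρ ?_ (hCi 0 (Nat.zero_le _))
    apply LinearMap.ext; intro x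
    exact hρd x

end Main

theorem stmt3 (R : Type) [Ring R] (C : Type) [AddCommGroup C] [Module Rᵐᵒᵖ C] (n : ℕ)
    (hso : ∀ i, 1 ≤ i →
      Subsingleton (extM Rᵐᵒᵖ i (ModuleCat.of Rᵐᵒᵖ C) (ModuleCat.of Rᵐᵒᵖ C)))
    (D : ℕ → ModuleCat.{0} Rᵐᵒᵖ) (d : ∀ i, D i ⟶ D (i + 1))
    (hinj : Function.Injective (d 0))
    (hsurj : Function.Surjective (d n))
    (hexact : ∀ i < n, Function.Exact (d i) (d (i + 1)))
    (hCi : ∀ i ≤ n, memAdd Rᵐᵒᵖ C (D (i + 1)))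
    (hN : ∀ i, 1 ≤ i → Subsingleton (extM Rᵐᵒᵖ i (ModuleCat.of Rᵐᵒᵖ C) (D 0))) :
    memAdd Rᵐᵒᵖ C (D 0) := by
  have P : ProjectiveResolution (ModuleCat.of Rᵐᵒᵖ C) := ProjectiveResolution.of _
  have hsoV : ∀ i, Van P (ModuleCat.of Rᵐᵒᵖ C) i :=
    fun i => (van_iff P _ i).mp (hso (i + 1) (Nat.le_add_left 1 i))
  have hVD0 : ∀ i, Van P (D 0) i :=
    fun i => (van_iff P _ i).mp (hN (i + 1) (Nat.le_add_left 1 i))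
  exact main_induction C P hsoV n D d hinj hsurj hexact hCi hVD0
end

section
/- Let C be a self-orthogonal right R-module and n ≥ 0. If M is a right R-module with Ext^i_R(M, C) = 0 for all i ≥ 1, and there exists an exact sequence 0 → Cₙ → ··· → C₁ → C₀ → M → 0 with each C_i ∈ add(C), then M ∈ add(C). -/
/-!
STATEMENT 4: Let C be a self-orthogonal right R-module (right R-modules are modeled
as `Rᵐᵒᵖ`-modules) and n ≥ 0.  If M satisfies Ext^i_R(M, C) = 0 for all i ≥ 1 and
admits an exact sequence 0 → Cₙ → ⋯ → C₁ → C₀ → M → 0 with each Cᵢ ∈ add(C),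
then M ∈ add(C).
Encoding: `D 0, …, D n` are `Cₙ, …, C₀` and `D (n+1) = M`; the maps are
`d i : D i ⟶ D (i+1)`; values of `D`, `d` at indices `> n+1` are irrelevant.
-/

open CategoryTheory Opposite

namespace Stmt4Aux

variable {A : Type} [Ring A]

lemma happ {X Y : ModuleCat.{0} A} {f g : X ⟶ Y} (h : f = g) (x : X) : f x = g x := by rw [h]

/-- Concrete vanishing of `Ext^{i+1}(X, Y)` w.r.t. a projective resolution `P` of `X`. -/
def ConcV {X : ModuleCat.{0} A} (P : ProjectiveResolution X) (i : ℕ) (Y : ModuleCat.{0} A) :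
    Prop :=
  ∀ f : P.complex.X (i+1) ⟶ Y, P.complex.d (i+2) (i+1) ≫ f = 0 →
    ∃ g : P.complex.X i ⟶ Y, P.complex.d (i+1) i ≫ g = f

lemma projMod (X : ModuleCat.{0} A) [Projective X] : Module.Projective A X :=
  inferInstance

lemma concV_of_subsingleton {X : ModuleCat.{0} A} (P : ProjectiveResolution X)
    (i : ℕ) (Y : ModuleCat.{0} A) (h : Subsingleton (extM A (i+1) X Y)) :
    ConcV P i Y := by
  have e := P.isoExt (R := ℤ) (i+1) Y
  have hsurj : Function.Surjective e.hom := fun y =>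
    ⟨e.inv y, congrFun (congrArg (fun (f : _ ⟶ _) => (f : _ → _)) e.inv_hom_id) y⟩
  have h2 : Subsingleton ((P.complex.linearYonedaObj ℤ Y).homology (i+1)) := by
    unfold extM at h; exact hsurj.subsingleton
  have h3 : (P.complex.linearYonedaObj ℤ Y).ExactAt (i+1) := by
    rw [HomologicalComplex.exactAt_iff_isZero_homology]
    exact ModuleCat.isZero_of_subsingleton _
  rw [HomologicalComplex.exactAt_iff' _ i (i+1) (i+2) (by simp) (by simp)] at h3
  rw [ShortComplex.moduleCat_exact_iff] at h3
  intro f hf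
  obtain ⟨g, hg⟩ := h3 f (by
    show (P.complex.linearYonedaObj ℤ Y).d (i+1) (i+2) f = 0
    exact hf)
  refine ⟨g, ?_⟩
  exact hg

variable (C : Type) [AddCommGroup C] [Module A C]

/-- Concrete vanishing passes from `C` to any `N ∈ add C`. -/
lemma concV_of_memAdd {X : ModuleCat.{0} A} (P : ProjectiveResolution X)
    (hC : ∀ i, ConcV P i (ModuleCat.of A C)) {N : ModuleCat.{0} A}
    (hN : memAdd A C N) (i : ℕ) : ConcV P i N := by
  obtain ⟨k, s, r, hrs⟩ := hN
  intro f hf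
  have hcomp : ∀ j : Fin k, ∃ g : P.complex.X i ⟶ ModuleCat.of A C,
      P.complex.d (i+1) i ≫ g =
        ModuleCat.ofHom ((LinearMap.proj (R := A) (φ := fun _ : Fin k => C) j).comp (s.comp f.hom) : _ →ₗ[A] C) := by
    intro j
    apply hC i
    ext x
    show (LinearMap.proj (R := A) (φ := fun _ : Fin k => C) j) (s (f (P.complex.d (i+2) (i+1) x))) = _
    rw [show f (P.complex.d (i+2) (i+1) x) = 0 from happ hf x]
    simp
  choose gs hgs using hcomp
  refine ⟨ModuleCat.ofHom (r.comp (LinearMap.pi (fun j => (gs j).hom)) : _ →ₗ[A] _), ?_⟩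
  ext x
  show r (fun j => gs j (P.complex.d (i+1) i x)) = f x
  have h1 : (fun j => gs j (P.complex.d (i+1) i x)) = s (f x) := by
    funext j
    exact happ (hgs j) x
  rw [h1]
  exact DFunLike.congr_fun hrs (f x)

section ses

variable {X : ModuleCat.{0} A} (P : ProjectiveResolution X)
variable {Y₁ Y₂ Y₃ : ModuleCat.{0} A} (u : Y₁ ⟶ Y₂) (v : Y₂ ⟶ Y₃)

/-- Lift a map into `Y₂` landing in `ker v = im u` through the injection `u`. -/
noncomputable def liftThru (hu : Function.Injective u) {W : ModuleCat.{0} A}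
    (φ : W →ₗ[A] Y₂) (hφ : ∀ x, φ x ∈ Set.range u) : W →ₗ[A] Y₁ :=
  (LinearEquiv.ofInjective u.hom hu).symm.toLinearMap ∘ₗ
    LinearMap.codRestrict (LinearMap.range u.hom) φ
      (fun x => by rw [LinearMap.mem_range]; obtain ⟨y, hy⟩ := hφ x; exact ⟨y, hy⟩)

lemma liftThru_spec (hu : Function.Injective u) {W : ModuleCat.{0} A}
    (φ : W →ₗ[A] Y₂) (hφ : ∀ x, φ x ∈ Set.range u) (x : W) :
    u (liftThru u hu φ hφ x) = φ x := by
  set e := LinearEquiv.ofInjective u.hom hu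
  have h1 : ∀ z : Y₁, (u z : Y₂) = ((e z : LinearMap.range u.hom) : Y₂) :=
    fun z => rfl
  show u (e.symm ⟨φ x, _⟩) = φ x
  rw [h1, e.apply_symm_apply]

/-- The long-exact-sequence fragment:
if `0 → Y₁ → Y₂ → Y₃ → 0` is exact, vanishing of `Ext^{i+2}(X,Y₁)` and `Ext^{i+1}(X,Y₂)`
implies vanishing of `Ext^{i+1}(X,Y₃)`. -/
lemma concV_ses (hu : Function.Injective u) (huv : Function.Exact u v)
    (hv : Function.Surjective v) (i : ℕ)
    (h1 : ConcV P (i+1) Y₁) (h2 : ConcV P i Y₂) : ConcV P i Y₃ := by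
  intro f hf
  have : Module.Projective A (P.complex.X (i+1)) := projMod _
  obtain ⟨ft, hft⟩ :=
    Module.projective_lifting_property v.hom f.hom hv
  have hftv : ∀ z, v (ft z) = f z := fun z => DFunLike.congr_fun hft z
  have hmem : ∀ x : P.complex.X (i+2),
      ft (P.complex.d (i+2) (i+1) x) ∈ Set.range u := by
    intro x
    rw [← huv _]
    show v (ft (P.complex.d (i+2) (i+1) x)) = 0
    rw [hftv]
    exact happ hf x
  set χ : P.complex.X (i+2) →ₗ[A] Y₁ :=
    liftThru u hu (ft ∘ₗ (P.complex.d (i+2) (i+1)).hom) hmem with hχ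
  have hχspec : ∀ x, u (χ x) = ft (P.complex.d (i+2) (i+1) x) :=
    fun x => liftThru_spec u hu _ hmem x
  obtain ⟨θ, hθ⟩ := h1 (ModuleCat.ofHom χ) (by
    ext x
    apply hu
    show u (χ (P.complex.d (i+3) (i+2) x)) = u 0
    rw [hχspec, map_zero]
    have : P.complex.d (i+3) (i+2) ≫ P.complex.d (i+2) (i+1) = 0 :=
      P.complex.d_comp_d _ _ _
    rw [show P.complex.d (i+2) (i+1) (P.complex.d (i+3) (i+2) x) = 0 from happ this x,
      map_zero])
  have hθa : ∀ x, θ (P.complex.d (i+2) (i+1) x) = χ x := fun x => happ hθ x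
  obtain ⟨ξ, hξ⟩ := h2 (ModuleCat.ofHom (ft - u.hom ∘ₗ θ.hom : _ →ₗ[A] Y₂)) (by
    ext x
    show ft (P.complex.d (i+2) (i+1) x) - u (θ (P.complex.d (i+2) (i+1) x)) = 0
    rw [hθa, hχspec, sub_self])
  have hξa : ∀ x, ξ (P.complex.d (i+1) i x) = ft x - u (θ x) := fun x => happ hξ x
  refine ⟨ModuleCat.ofHom (v.hom ∘ₗ ξ.hom : _ →ₗ[A] Y₃), ?_⟩
  ext x
  show v (ξ (P.complex.d (i+1) i x)) = f x
  rw [hξa, map_sub, hftv, huv.apply_apply_eq_zero, sub_zero]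

/-- The splitting lemma: if `0 → Y₁ → Y₂ → X → 0` is exact and `Ext^1(X, Y₁) = 0`
(concretely), then the sequence splits. -/
lemma splits {E : ModuleCat.{0} A} (w : Y₁ ⟶ E) (p : E ⟶ X)
    (hw : Function.Injective w) (hwp : Function.Exact w p) (hp : Function.Surjective p)
    (h0 : ConcV P 0 Y₁) :
    ∃ sct : X →ₗ[A] E, p.hom ∘ₗ sct = LinearMap.id := by
  set ε : P.complex.X 0 ⟶ X := P.π.f 0 with hε
  have hεs : Function.Surjective ε := by
    rw [← ModuleCat.epi_iff_surjective, hε]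
    exact (inferInstance : Epi (P.π.f 0))
  have hεd : ∀ x, ε (P.complex.d 1 0 x) = 0 :=
    fun x => happ P.complex_d_comp_π_f_zero x
  have hexact0 : ∀ z : P.complex.X 0, ε z = 0 → ∃ y, P.complex.d 1 0 y = z := by
    have h := P.exact₀
    rw [ShortComplex.moduleCat_exact_iff] at h
    exact fun z hz => h z hz
  have : Module.Projective A (P.complex.X 0) := projMod _
  obtain ⟨α, hα⟩ :=
    Module.projective_lifting_property p.hom ε.hom hp
  have hαp : ∀ z, p (α z) = ε z := fun z => DFunLike.congr_fun hα z
  have hmem : ∀ x : P.complex.X 1, α (P.complex.d 1 0 x) ∈ Set.range w := by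
    intro x
    rw [← hwp _]
    show p (α (P.complex.d 1 0 x)) = 0
    rw [hαp, hεd]
  set χ : P.complex.X 1 →ₗ[A] Y₁ :=
    liftThru w hw (α ∘ₗ (P.complex.d 1 0).hom) hmem with hχ
  have hχspec : ∀ x, w (χ x) = α (P.complex.d 1 0 x) :=
    fun x => liftThru_spec w hw _ hmem x
  obtain ⟨ψ, hψ⟩ := h0 (ModuleCat.ofHom χ) (by
    ext x
    apply hw
    show w (χ (P.complex.d 2 1 x)) = w 0
    rw [hχspec, map_zero]
    have : P.complex.d 2 1 ≫ P.complex.d 1 0 = 0 := P.complex.d_comp_d _ _ _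
    rw [show P.complex.d 1 0 (P.complex.d 2 1 x) = 0 from happ this x, map_zero])
  have hψa : ∀ x, ψ (P.complex.d 1 0 x) = χ x := fun x => happ hψ x
  set α' : P.complex.X 0 →ₗ[A] E :=
    (α - w.hom ∘ₗ ψ.hom : _ →ₗ[A] E) with hα'
  have hα'd : ∀ x, α' (P.complex.d 1 0 x) = 0 := by
    intro x
    show α (P.complex.d 1 0 x) - w (ψ (P.complex.d 1 0 x)) = 0
    rw [hψa, hχspec, sub_self]
  have hα'ker : ∀ z, ε z = 0 → α' z = 0 := by
    intro z hz
    obtain ⟨y, hy⟩ := hexact0 z hz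
    rw [← hy, hα'd]
  have hpα' : ∀ z, p (α' z) = ε z := by
    intro z
    show p (α z - w (ψ z)) = ε z
    rw [map_sub, hαp, hwp.apply_apply_eq_zero, sub_zero]
  have key : ∀ y z, ε y = ε z → α' y = α' z := by
    intro y z h
    have : α' (y - z) = 0 := hα'ker _ (by rw [map_sub, h, sub_self])
    rw [map_sub, sub_eq_zero] at this
    exact this
  classical
  set σ : X → P.complex.X 0 := Function.surjInv hεs with hσ
  have hσε : ∀ x, ε (σ x) = x := fun x => Function.surjInv_eq hεs x
  refine ⟨{ toFun := fun x => α' (σ x)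
            map_add' := by
              intro x y
              rw [← map_add]
              exact key _ _ (by rw [hσε, map_add, hσε, hσε])
            map_smul' := by
              intro a x
              show α' (σ (a • x)) = a • α' (σ x)
              rw [← map_smul]
              exact key _ _ (by rw [hσε, map_smul, hσε]) }, ?_⟩
  ext x
  show p (α' (σ x)) = x
  rw [hpα', hσε]

end ses

/-- `memAdd` is invariant under linear isomorphism. -/
lemma memAdd_congr {N N' : ModuleCat.{0} A} (e : N ≃ₗ[A] N') (h : memAdd A C N) :
    memAdd A C N' := by
  obtain ⟨k, s, r, hrs⟩ := h
  refine ⟨k, s ∘ₗ e.symm.toLinearMap, e.toLinearMap ∘ₗ r, ?_⟩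
  ext x
  show e (r (s (e.symm x))) = x
  rw [show r (s (e.symm x)) = e.symm x from DFunLike.congr_fun hrs (e.symm x)]
  simp

end Stmt4Aux

theorem stmt4 (R : Type) [Ring R] (C : Type) [AddCommGroup C] [Module Rᵐᵒᵖ C] (n : ℕ)
    (hso : ∀ i, 1 ≤ i →
      Subsingleton (extM Rᵐᵒᵖ i (ModuleCat.of Rᵐᵒᵖ C) (ModuleCat.of Rᵐᵒᵖ C)))
    (D : ℕ → ModuleCat.{0} Rᵐᵒᵖ) (d : ∀ i, D i ⟶ D (i + 1))
    (hinj : Function.Injective (d 0))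
    (hsurj : Function.Surjective (d n))
    (hexact : ∀ i < n, Function.Exact (d i) (d (i + 1)))
    (hCi : ∀ i ≤ n, memAdd Rᵐᵒᵖ C (D i))
    (hM : ∀ i, 1 ≤ i → Subsingleton (extM Rᵐᵒᵖ i (D (n + 1)) (ModuleCat.of Rᵐᵒᵖ C))) :
    memAdd Rᵐᵒᵖ C (D (n + 1)) := by
  classical
  rcases Nat.eq_zero_or_pos n with rfl | hn
  · exact Stmt4Aux.memAdd_congr C
      (LinearEquiv.ofBijective (d 0).hom ⟨hinj, hsurj⟩) (hCi 0 le_rfl)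
  set A := Rᵐᵒᵖ
  set M : ModuleCat.{0} A := D (n+1) with hMdef
  let P : ProjectiveResolution M := projectiveResolution M
  have hCconc : ∀ i, Stmt4Aux.ConcV P i (ModuleCat.of A C) := fun i =>
    Stmt4Aux.concV_of_subsingleton P i _ (hM (i+1) (by omega))
  have hAdd : ∀ {N : ModuleCat.{0} A}, memAdd A C N → ∀ i, Stmt4Aux.ConcV P i N :=
    fun hN i => Stmt4Aux.concV_of_memAdd C P hCconc hN i
  -- kernels of the differentials
  let K : ℕ → ModuleCat.{0} A := fun j =>
    ModuleCat.of A (LinearMap.ker (d j).hom)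
  let incl : ∀ j, K j ⟶ D j := fun j =>
    ModuleCat.ofHom ((LinearMap.ker (d j).hom).subtype : K j →ₗ[A] D j)
  have hincl_inj : ∀ j, Function.Injective (incl j) := fun j => Subtype.coe_injective
  have hincl_exact : ∀ j, Function.Exact (incl j) (d j) := by
    intro j y
    constructor
    · intro hy
      exact ⟨⟨y, hy⟩, rfl⟩
    · rintro ⟨⟨z, hz⟩, rfl⟩
      exact hz
  -- the corestrictions
  have hd_into : ∀ j, j < n → ∀ x : D j, (d j).hom x ∈
      LinearMap.ker (d (j+1)).hom :=
    fun j hj x => (hexact j hj).apply_apply_eq_zero x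
  let pr : ∀ j, j < n → (D j ⟶ K (j+1)) := fun j hj =>
    ModuleCat.ofHom (LinearMap.codRestrict _ (d j).hom (hd_into j hj) : D j →ₗ[A] K (j+1))
  have hpr_surj : ∀ j (hj : j < n), Function.Surjective (pr j hj) := by
    rintro j hj ⟨y, hy⟩
    obtain ⟨x, hx⟩ := (hexact j hj y).1 hy
    exact ⟨x, Subtype.ext hx⟩
  have hpr_exact : ∀ j (hj : j < n), Function.Exact (incl j) (pr j hj) := by
    intro j hj y
    constructor
    · intro hy
      exact ⟨⟨y, congrArg Subtype.val hy⟩, rfl⟩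
    · rintro ⟨⟨z, hz⟩, rfl⟩
      exact Subtype.ext hz
  -- vanishing for all the kernels
  have hV : ∀ j, 1 ≤ j → j ≤ n → ∀ i, Stmt4Aux.ConcV P i (K j) := by
    intro j
    induction j with
    | zero => intro h; omega
    | succ j ih =>
      intro _ hjn i
      rcases Nat.eq_zero_or_pos j with rfl | hj
      · -- base case: K 1 ≅ D 0
        refine hAdd (Stmt4Aux.memAdd_congr C ?_ (hCi 0 (by omega))) i
        refine LinearEquiv.ofBijective
          (LinearMap.codRestrict _ (d 0).hom (hd_into 0 hn)) ⟨?_, ?_⟩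
        · intro x y hxy
          exact hinj (congrArg Subtype.val hxy)
        · rintro ⟨y, hy⟩
          obtain ⟨x, hx⟩ := (hexact 0 hn y).1 hy
          exact ⟨x, Subtype.ext hx⟩
      · exact Stmt4Aux.concV_ses P (incl j) (pr j (by omega)) (hincl_inj j)
          (hpr_exact j (by omega)) (hpr_surj j (by omega)) i
          (ih (by omega) (by omega) (i+1)) (hAdd (hCi j (by omega)) i)
  -- split the last sequence
  obtain ⟨sct, hsct⟩ := Stmt4Aux.splits P (incl n) (d n) (hincl_inj n)
    (hincl_exact n) hsurj (hV n hn le_rfl 0)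
  obtain ⟨k, s0, r0, hrs0⟩ := hCi n le_rfl
  refine ⟨k, s0 ∘ₗ sct, (d n).hom ∘ₗ r0, ?_⟩
  ext x
  show d n (r0 (s0 (sct x))) = x
  rw [show r0 (s0 (sct x)) = sct x from DFunLike.congr_fun hrs0 (sct x)]
  exact DFunLike.congr_fun hsct x
end
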